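/- Composite error dynamics for path coordination. Let ξ : I → ℝ^{(n+1)N} be a differentiable function on an interval I satisfying ξ̇^i(t) = χ^i(ξ^i(t), w(t)) for all i, where w(t) collects the (n+1)-th components. Then along this solution: (i) d/dt Φ(ξ(t)) = −K Φ − 𝔉(w) 𝔉(w)ᵀ K Φ + k_c 𝔉(w) L w̃; (ii) d/dt w(t) = (−1)^n 1_N + 𝔉(w)ᵀ K Φ − k_c L w̃, where 1_N ∈ ℝ^N is the all-ones vector; consequently (iii) d/dt (Dᵀ w̃(t)) = Dᵀ 𝔉(w)ᵀ K Φ − k_c Dᵀ L w̃ (using Dᵀ1_N = 0 for the incidence matrix of a graph). -/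

import Mathlib

open Filter Topology Matrix

/-- stacked path-following error `Φ ∈ ℝ^{nN}`, indexed by robot–coordinate pairs -/
noncomputable def stackPhi (n N : ℕ) (f : Fin N → Fin n → ℝ → ℝ)
    (x : Fin N → Fin n → ℝ) (w : Fin N → ℝ) : Fin N × Fin n → ℝ :=
  fun p => x p.1 p.2 - f p.1 p.2 (w p.1)

/-- block-diagonal gain matrix `K = blockdiag(K^1, …, K^N)` -/
noncomputable def stackK (n N : ℕ) (k : Fin N → Fin n → ℝ) :
    Matrix (Fin N × Fin n) (Fin N × Fin n) ℝ :=
  Matrix.diagonal fun p => k p.1 p.2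

/-- block-diagonal matrix `𝔉(w) = blockdiag(f^1'(w^1), …, f^N'(w^N)) ∈ ℝ^{nN×N}` -/
noncomputable def stackF (n N : ℕ) (f : Fin N → Fin n → ℝ → ℝ) (w : Fin N → ℝ) :
    Matrix (Fin N × Fin n) (Fin N) ℝ :=
  fun p i => if p.1 = i then deriv (f p.1 p.2) (w p.1) else 0

lemma stackKPhi_apply (n N : ℕ) (f : Fin N → Fin n → ℝ → ℝ) (k : Fin N → Fin n → ℝ)
    (x : Fin N → Fin n → ℝ) (w : Fin N → ℝ) (p : Fin N × Fin n) :
    (stackK n N k *ᵥ stackPhi n N f x w) p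
      = k p.1 p.2 * (x p.1 p.2 - f p.1 p.2 (w p.1)) := by
  simp [stackK, stackPhi, Matrix.mulVec_diagonal]

lemma FtKPhi_apply (n N : ℕ) (f : Fin N → Fin n → ℝ → ℝ) (k : Fin N → Fin n → ℝ)
    (x : Fin N → Fin n → ℝ) (w : Fin N → ℝ) (i : Fin N) :
    ((stackF n N f w).transpose *ᵥ (stackK n N k *ᵥ stackPhi n N f x w)) i
      = ∑ l, k i l * (x i l - f i l (w i)) * deriv (f i l) (w i) := by
  simp only [Matrix.mulVec, dotProduct, Matrix.transpose_apply, stackF]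
  rw [Fintype.sum_prod_type, Finset.sum_eq_single i]
  · refine Finset.sum_congr rfl fun l _ => ?_
    have := stackKPhi_apply n N f k x w (i, l)
    simp only [Matrix.mulVec, dotProduct] at this
    simp only [eq_self_iff_true, if_true, this]
    ring
  · intro b _ hb; simp [hb]
  · simp

lemma F_mulVec_apply0 (n N : ℕ) (f : Fin N → Fin n → ℝ → ℝ) (w : Fin N → ℝ)
    (v : Fin N → ℝ) (p : Fin N × Fin n) :
    (stackF n N f w *ᵥ v) p = deriv (f p.1 p.2) (w p.1) * v p.1 := by
  simp [stackF, Matrix.mulVec, dotProduct, ite_mul]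

lemma F_mulVec_apply (n N : ℕ) (f : Fin N → Fin n → ℝ → ℝ) (w : Fin N → ℝ)
    (v : Fin N → ℝ) (p : Fin N × Fin n) :
    (stackF n N f w *ᵥ v) p = deriv (f p.1 p.2) (w p.1) * v p.1 :=
  F_mulVec_apply0 n N f w v p

lemma FFt_mulVec_apply (n N : ℕ) (f : Fin N → Fin n → ℝ → ℝ) (w : Fin N → ℝ)
    (v : Fin N × Fin n → ℝ) (p : Fin N × Fin n) :
    ((stackF n N f w * (stackF n N f w).transpose) *ᵥ v) p
      = deriv (f p.1 p.2) (w p.1) * (((stackF n N f w).transpose *ᵥ v) p.1) := by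
  rw [← Matrix.mulVec_mulVec]
  exact F_mulVec_apply n N f w _ p

theorem composite_error_dynamics_paths
    (n N : ℕ) (hn : 1 ≤ n) (hN : 1 ≤ N)
    (f : Fin N → Fin n → ℝ → ℝ) (hf : ∀ i j, ContDiff ℝ 2 (f i j))
    (k : Fin N → Fin n → ℝ) (hk : ∀ i j, 0 < k i j)
    (kc : ℝ) (hkc : 0 < kc)
    (G : SimpleGraph (Fin N)) [DecidableRel G.Adj]
    (E : ℕ) (D : Matrix (Fin N) (Fin E) ℝ)
    (hD : G.lapMatrix ℝ = D * D.transpose)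
    (wstar : Fin N → ℝ)
    (I : Set ℝ)
    (x : ℝ → Fin N → Fin n → ℝ) (w : ℝ → Fin N → ℝ)
    -- the first `n` components of `χ^i`
    (hode_x : ∀ (i : Fin N) (j : Fin n), ∀ t ∈ I,
      HasDerivAt (fun s => x s i j)
        ((-1 : ℝ) ^ n * deriv (f i j) (w t i)
          - k i j * (x t i j - f i j (w t i))) t)
    -- the `(n+1)`-th component of `χ^i`
    (hode_w : ∀ (i : Fin N), ∀ t ∈ I,
      HasDerivAt (fun s => w s i)
        ((-1 : ℝ) ^ n
          + (∑ l, k i l * (x t i l - f i l (w t i)) * deriv (f i l) (w t i))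
          + kc * (-(G.lapMatrix ℝ *ᵥ (fun m => w t m - wstar m)) i)) t) :
    -- (i) `d/dt Φ = -KΦ - 𝔉𝔉ᵀKΦ + k_c 𝔉 L w̃`
    (∀ (p : Fin N × Fin n), ∀ t ∈ I,
      HasDerivAt (fun s => stackPhi n N f (x s) (w s) p)
        ((-(stackK n N k *ᵥ stackPhi n N f (x t) (w t))
          - (stackF n N f (w t) * (stackF n N f (w t)).transpose) *ᵥ
              (stackK n N k *ᵥ stackPhi n N f (x t) (w t))
          + kc • (stackF n N f (w t) *ᵥ
              (G.lapMatrix ℝ *ᵥ (fun m => w t m - wstar m)))) p) t) ∧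
    -- (ii) `d/dt w = (-1)^n 1_N + 𝔉ᵀKΦ - k_c L w̃`
    (∀ (i : Fin N), ∀ t ∈ I,
      HasDerivAt (fun s => w s i)
        (((-1 : ℝ) ^ n • (1 : Fin N → ℝ)
          + (stackF n N f (w t)).transpose *ᵥ
              (stackK n N k *ᵥ stackPhi n N f (x t) (w t))
          - kc • (G.lapMatrix ℝ *ᵥ (fun m => w t m - wstar m))) i) t) ∧
    -- (iii) `d/dt (Dᵀ w̃) = Dᵀ𝔉ᵀKΦ - k_c Dᵀ L w̃`
    (∀ (e : Fin E), ∀ t ∈ I,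
      HasDerivAt (fun s => (D.transpose *ᵥ (fun m => w s m - wstar m)) e)
        ((D.transpose *ᵥ ((stackF n N f (w t)).transpose *ᵥ
              (stackK n N k *ᵥ stackPhi n N f (x t) (w t)))
          - kc • (D.transpose *ᵥ
              (G.lapMatrix ℝ *ᵥ (fun m => w t m - wstar m)))) e) t) := by
  -- notation
  set L := G.lapMatrix ℝ with hL
  -- the w-derivative, restated
  have hw' : ∀ (i : Fin N), ∀ t ∈ I,
      HasDerivAt (fun s => w s i)
        (((-1 : ℝ) ^ n • (1 : Fin N → ℝ)
          + (stackF n N f (w t)).transpose *ᵥ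
              (stackK n N k *ᵥ stackPhi n N f (x t) (w t))
          - kc • (L *ᵥ (fun m => w t m - wstar m))) i) t := by
    intro i t ht
    have h := hode_w i t ht
    convert h using 1
    simp only [Pi.sub_apply, Pi.add_apply, Pi.smul_apply, Pi.one_apply, smul_eq_mul,
      FtKPhi_apply, Pi.neg_apply]
    ring
  refine ⟨?_, hw', ?_⟩
  · -- (i)
    intro p t ht
    obtain ⟨i, j⟩ := p
    have hx := hode_x i j t ht
    have hfj : HasDerivAt (f i j) (deriv (f i j) (w t i)) (w t i) :=
      (((hf i j).differentiable (by norm_num)) (w t i)).hasDerivAt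
    have hcomp : HasDerivAt (fun s => f i j (w s i))
        (deriv (f i j) (w t i) *
          ((-1 : ℝ) ^ n
            + (∑ l, k i l * (x t i l - f i l (w t i)) * deriv (f i l) (w t i))
            + kc * (-(L *ᵥ (fun m => w t m - wstar m)) i))) t :=
      hfj.comp t (hode_w i t ht)
    have hΦ := hx.fun_sub hcomp
    refine hΦ.congr_deriv ?_
    simp only [Pi.add_apply, Pi.sub_apply, Pi.neg_apply, Pi.smul_apply, smul_eq_mul]
    rw [FFt_mulVec_apply, FtKPhi_apply, F_mulVec_apply, stackKPhi_apply]
    ring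
  · -- (iii)
    intro e t ht
    -- Dᵀ annihilates constants
    have hDt1 : D.transpose *ᵥ (fun _ => (1 : ℝ)) = 0 := by
      have h0 : (D.transpose *ᵥ (fun _ => (1 : ℝ))) ⬝ᵥ
          (D.transpose *ᵥ (fun _ => (1 : ℝ))) = 0 := by
        rw [Matrix.dotProduct_mulVec, Matrix.vecMul_transpose, Matrix.mulVec_mulVec,
          ← hD, hL, G.lapMatrix_mulVec_const_eq_zero, zero_dotProduct]
      exact dotProduct_self_eq_zero.mp h0
    have h1 : ∑ m, D.transpose e m = 0 := by
      have := congrFun hDt1 e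
      simpa [Matrix.mulVec, dotProduct] using this
    set A := (stackF n N f (w t)).transpose *ᵥ
        (stackK n N k *ᵥ stackPhi n N f (x t) (w t)) with hA
    set B := L *ᵥ (fun m => w t m - wstar m) with hB
    have hsum : HasDerivAt (fun s => ∑ m, D.transpose e m * (w s m - wstar m))
        (∑ m, D.transpose e m *
          (((-1 : ℝ) ^ n • (1 : Fin N → ℝ) + A - kc • B) m)) t :=
      HasDerivAt.fun_sum fun m _ => ((hw' m t ht).sub_const (wstar m)).const_mul _
    have heq : (fun s => (D.transpose *ᵥ (fun m => w s m - wstar m)) e)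
        = fun s => ∑ m, D.transpose e m * (w s m - wstar m) := rfl
    rw [heq]
    convert hsum using 1
    simp only [Pi.sub_apply, Pi.add_apply, Pi.smul_apply, Pi.one_apply, smul_eq_mul,
      mul_one, mul_add, mul_sub, Finset.sum_add_distrib, Finset.sum_sub_distrib]
    rw [← Finset.sum_mul, h1]
    simp only [Matrix.mulVec, dotProduct, Finset.mul_sum]
    ring_nf
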